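/- Suppose n, m, k are non-negative integers with m > 0, 2 ≤ b ≤ 10, d is the number of base-b digits of L_k, and L_n = F_m·b^d + L_k. Then m + k - 5 < n < m + k + 7·log b. -/

import Mathlib

def lucas : ℕ → ℕ
  | 0 => 2
  | 1 => 1
  | n + 2 => lucas (n + 1) + lucas n

lemma lucas_pos : ∀ n, 0 < lucas n := by
  have h : ∀ n, 0 < lucas n ∧ 0 < lucas (n + 1) := by
    intro n
    induction n with
    | zero => exact ⟨by norm_num [lucas], by norm_num [lucas]⟩
    | succ p ih => exact ⟨ih.2, by rw [lucas]; omega⟩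
  exact fun n => (h n).1

lemma gold_gt : (1.6 : ℝ) < Real.goldenRatio := by
  rw [Real.goldenRatio]
  nlinarith [Real.sq_sqrt (by norm_num : (5:ℝ) ≥ 0), Real.sqrt_nonneg 5]

lemma gold_pow_step (a : ℕ) :
    Real.goldenRatio ^ (a + 2) = Real.goldenRatio ^ (a + 1) + Real.goldenRatio ^ a := by
  have h := Real.goldenRatio_sq
  calc Real.goldenRatio ^ (a + 2) = Real.goldenRatio ^ a * Real.goldenRatio ^ 2 := by ring
    _ = Real.goldenRatio ^ a * (Real.goldenRatio + 1) := by rw [h]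
    _ = Real.goldenRatio ^ (a + 1) + Real.goldenRatio ^ a := by ring

/-- `L_k ≤ 2 φ^k`. -/
lemma lucas_le : ∀ k, (lucas k : ℝ) ≤ 2 * Real.goldenRatio ^ k := by
  have h : ∀ k, (lucas k : ℝ) ≤ 2 * Real.goldenRatio ^ k ∧
      (lucas (k + 1) : ℝ) ≤ 2 * Real.goldenRatio ^ (k + 1) := by
    intro k
    induction k with
    | zero =>
      constructor
      · norm_num [lucas]
      · norm_num [lucas]
        nlinarith [gold_gt]
    | succ p ih =>
      refine ⟨ih.2, ?_⟩
      rw [lucas, gold_pow_step]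
      push_cast
      nlinarith [ih.1, ih.2]
  exact fun k => (h k).1

/-- `φ^k ≤ φ L_k`. -/
lemma le_lucas : ∀ k, Real.goldenRatio ^ k ≤ Real.goldenRatio * (lucas k : ℝ) := by
  have h : ∀ k, Real.goldenRatio ^ k ≤ Real.goldenRatio * (lucas k : ℝ) ∧
      Real.goldenRatio ^ (k + 1) ≤ Real.goldenRatio * (lucas (k + 1) : ℝ) := by
    intro k
    induction k with
    | zero =>
      constructor
      · norm_num [lucas]
      · norm_num [lucas]
    | succ p ih =>
      refine ⟨ih.2, ?_⟩
      rw [lucas, gold_pow_step]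
      push_cast
      nlinarith [ih.1, ih.2]
  exact fun k => (h k).1

/-- `φ F_m ≤ φ^m`. -/
lemma gold_fib_le (m : ℕ) : Real.goldenRatio * (Nat.fib m : ℝ) ≤ Real.goldenRatio ^ m := by
  cases m with
  | zero => simp [Real.goldenRatio_pos.le]
  | succ p =>
    have h := Real.goldenRatio_mul_fib_succ_add_fib p
    have : (0:ℝ) ≤ Nat.fib p := by positivity
    linarith

/-- `φ^m ≤ φ² F_m` for `m ≥ 1`. -/
lemma le_gold_fib (m : ℕ) (hm : 0 < m) :
    Real.goldenRatio ^ m ≤ Real.goldenRatio ^ 2 * (Nat.fib m : ℝ) := by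
  obtain ⟨p, rfl⟩ := Nat.exists_eq_add_of_lt hm
  rw [zero_add]
  have h := Real.goldenRatio_mul_fib_succ_add_fib p
  have h2 : (Nat.fib p : ℝ) ≤ Nat.fib (p + 1) := by
    exact_mod_cast Nat.fib_le_fib_succ
  have h3 : (0:ℝ) ≤ Nat.fib (p + 1) := by positivity
  rw [Real.goldenRatio_sq]
  nlinarith [Real.one_lt_goldenRatio]

lemma gold_sq_gt : (2.56:ℝ) < Real.goldenRatio ^ 2 := by nlinarith [gold_gt]

lemma gold_pow4_gt : (6.55:ℝ) < Real.goldenRatio ^ 4 := by nlinarith [gold_sq_gt]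

lemma gold_pow7_gt : (26:ℝ) < Real.goldenRatio ^ 7 := by
  have e : Real.goldenRatio ^ 7 = Real.goldenRatio ^ 4 * Real.goldenRatio ^ 2 * Real.goldenRatio := by ring
  rw [e]
  nlinarith [gold_sq_gt, gold_pow4_gt, gold_gt, Real.goldenRatio_pos]

theorem concat_fib_lucas_n_bounds (n m k b d : ℕ) (hm : 0 < m)
    (hb : 2 ≤ b) (hb' : b ≤ 10) (hd : d = Nat.log b (lucas k) + 1)
    (heq : lucas n = Nat.fib m * b ^ d + lucas k) :
    (m : ℝ) + k - 5 < n ∧ (n : ℝ) < m + k + 7 * Real.log b := by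
  set g := Real.goldenRatio with hg
  have hg1 : (1:ℝ) < g := Real.one_lt_goldenRatio
  have hg16 : (1.6:ℝ) < g := gold_gt
  have hg2 : g < 2 := Real.goldenRatio_lt_two
  have hLk : 0 < lucas k := lucas_pos k
  have hfib : 1 ≤ Nat.fib m := (Nat.fib_pos).mpr hm
  -- digit bounds
  have hbd1 : lucas k < b ^ d := by
    rw [hd]
    exact Nat.lt_pow_succ_log_self (by omega) _
  have hbd2 : b ^ d ≤ b * lucas k := by
    rw [hd, pow_succ']
    exact Nat.mul_le_mul_left b (Nat.pow_log_le_self b hLk.ne')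
  -- nat bounds on lucas n
  have hlow : Nat.fib m * lucas k < lucas n := by
    calc Nat.fib m * lucas k < Nat.fib m * b ^ d :=
          mul_lt_mul_of_pos_left hbd1 (by omega)
      _ ≤ lucas n := by omega
  have hup : lucas n ≤ (b + 1) * (Nat.fib m * lucas k) := by
    have h1 : Nat.fib m * b ^ d ≤ Nat.fib m * (b * lucas k) :=
      Nat.mul_le_mul_left _ hbd2
    have h2 : lucas k ≤ Nat.fib m * lucas k := Nat.le_mul_of_pos_left _ hfib
    calc lucas n = Nat.fib m * b ^ d + lucas k := heq
      _ ≤ Nat.fib m * (b * lucas k) + Nat.fib m * lucas k := by omega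
      _ = (b + 1) * (Nat.fib m * lucas k) := by ring
  -- real versions
  have hlowR : (Nat.fib m : ℝ) * lucas k < lucas n := by exact_mod_cast hlow
  have hupR : (lucas n : ℝ) ≤ (b + 1) * ((Nat.fib m : ℝ) * lucas k) := by
    exact_mod_cast hup
  have hF1 : g * (Nat.fib m : ℝ) ≤ g ^ m := gold_fib_le m
  have hF2 : g ^ m ≤ g ^ 2 * (Nat.fib m : ℝ) := le_gold_fib m hm
  have hL1 : (lucas k : ℝ) ≤ 2 * g ^ k := lucas_le k
  have hL2 : g ^ k ≤ g * (lucas k : ℝ) := le_lucas k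
  have hN1 : (lucas n : ℝ) ≤ 2 * g ^ n := lucas_le n
  have hN2 : g ^ n ≤ g * (lucas n : ℝ) := le_lucas n
  have hFpos : (0:ℝ) < Nat.fib m := by exact_mod_cast hfib
  have hLpos : (0:ℝ) < lucas k := by exact_mod_cast hLk
  have hgpow : ∀ j : ℕ, (0:ℝ) < g ^ j := fun j => pow_pos Real.goldenRatio_pos j
  constructor
  · -- lower bound: g^(m+k) < g^(n+5)
    have key : g ^ (m + k) < g ^ (n + 5) := by
      have c1 : g ^ (m + k) = g ^ m * g ^ k := pow_add g m k
      have c2 : g ^ m * g ^ k ≤ (g ^ 2 * Nat.fib m) * (g * lucas k) := by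
        apply mul_le_mul hF2 hL2 (hgpow k).le
        positivity
      have c3 : (g ^ 2 * (Nat.fib m : ℝ)) * (g * lucas k)
          = g ^ 3 * ((Nat.fib m : ℝ) * lucas k) := by ring
      have c4 : g ^ 3 * ((Nat.fib m : ℝ) * lucas k) < g ^ 3 * lucas n := by
        apply mul_lt_mul_of_pos_left hlowR (hgpow 3)
      have c5 : g ^ 3 * (lucas n : ℝ) ≤ g ^ 3 * (2 * g ^ n) :=
        mul_le_mul_of_nonneg_left hN1 (hgpow 3).le
      have c6 : g ^ 3 * (2 * g ^ n) < g ^ (n + 5) := by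
        have : g ^ (n + 5) = g ^ 2 * (g ^ 3 * g ^ n) := by ring
        rw [this]
        have h2g : (2:ℝ) < g ^ 2 := by nlinarith
        nlinarith [hgpow 3, hgpow n, mul_pos (hgpow 3) (hgpow n)]
      linarith [c2, c4, c5, c6, c1.le]
    have hnat : m + k < n + 5 := (pow_lt_pow_iff_right₀ hg1).mp key
    have : (m:ℝ) + k < n + 5 := by exact_mod_cast hnat
    linarith
  · -- upper bound: g^(n+1) ≤ 2(b+1) g^(m+k+1)
    have hbR : (2:ℝ) ≤ b := by exact_mod_cast hb
    have hbR' : (b:ℝ) ≤ 10 := by exact_mod_cast hb'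
    have key : g ^ (n + 1) ≤ 2 * (b + 1) * g ^ (m + k + 1) := by
      have c1 : g ^ (n + 1) = g * g ^ n := by ring
      have c2 : g * g ^ n ≤ g * (g * lucas n) :=
        mul_le_mul_of_nonneg_left hN2 Real.goldenRatio_pos.le
      have c3 : g * (g * (lucas n : ℝ)) ≤ g ^ 2 * ((b + 1) * (Nat.fib m * lucas k)) := by
        have : g * (g * (lucas n : ℝ)) = g ^ 2 * (lucas n : ℝ) := by ring
        rw [this]
        exact mul_le_mul_of_nonneg_left hupR (by positivity)
      have c4 : g ^ 2 * ((b + 1) * ((Nat.fib m : ℝ) * lucas k))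
          = (b + 1) * ((g * (g * Nat.fib m)) * lucas k) := by ring
      have c5 : (g * (g * (Nat.fib m : ℝ))) * lucas k ≤ (g * g ^ m) * (2 * g ^ k) := by
        apply mul_le_mul _ hL1 hLpos.le (by positivity)
        exact mul_le_mul_of_nonneg_left hF1 Real.goldenRatio_pos.le
      have c6 : ((b:ℝ) + 1) * ((g * g ^ m) * (2 * g ^ k)) = 2 * (b + 1) * g ^ (m + k + 1) := by
        rw [pow_add, pow_add]; ring
      have hb1 : (0:ℝ) < b + 1 := by linarith
      calc g ^ (n + 1) = g * g ^ n := c1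
        _ ≤ g * (g * lucas n) := c2
        _ ≤ g ^ 2 * ((b + 1) * (Nat.fib m * lucas k)) := c3
        _ = (b + 1) * ((g * (g * Nat.fib m)) * lucas k) := c4
        _ ≤ (b + 1) * ((g * g ^ m) * (2 * g ^ k)) := by
            exact mul_le_mul_of_nonneg_left c5 hb1.le
        _ = 2 * (b + 1) * g ^ (m + k + 1) := c6
    have h4 : (6.55:ℝ) < g ^ 4 := gold_pow4_gt
    rcases eq_or_lt_of_le hb with hb2 | hb3
    · -- b = 2
      have hbb : (b:ℝ) = 2 := by exact_mod_cast hb2.symm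
      have key2 : g ^ (n + 1) < g ^ (m + k + 5) := by
        have h6 : (2:ℝ) * ((b:ℝ) + 1) < g ^ 4 := by rw [hbb]; linarith
        have e : g ^ (m + k + 5) = g ^ 4 * g ^ (m + k + 1) := by ring
        rw [e]
        calc g ^ (n + 1) ≤ 2 * ((b:ℝ) + 1) * g ^ (m + k + 1) := key
          _ < g ^ 4 * g ^ (m + k + 1) :=
              mul_lt_mul_of_pos_right h6 (hgpow (m + k + 1))
      have hnat : n + 1 < m + k + 5 := (pow_lt_pow_iff_right₀ hg1).mp key2
      have hnR : (n:ℝ) ≤ m + k + 3 := by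
        have h' : n ≤ m + k + 3 := by omega
        exact_mod_cast h'
      have hlog : (0.6931471803 : ℝ) < Real.log 2 := Real.log_two_gt_d9
      rw [hbb]
      linarith
    · -- 3 ≤ b
      have hb3' : (3:ℝ) ≤ b := by exact_mod_cast hb3
      have key2 : g ^ (n + 1) < g ^ (m + k + 8) := by
        have h7 : (26:ℝ) < g ^ 7 := gold_pow7_gt
        have h22 : (2:ℝ) * ((b:ℝ) + 1) < g ^ 7 := by linarith
        have e : g ^ (m + k + 8) = g ^ 7 * g ^ (m + k + 1) := by ring
        rw [e]
        calc g ^ (n + 1) ≤ 2 * ((b:ℝ) + 1) * g ^ (m + k + 1) := key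
          _ < g ^ 7 * g ^ (m + k + 1) :=
              mul_lt_mul_of_pos_right h22 (hgpow (m + k + 1))
      have hnat : n + 1 < m + k + 8 := (pow_lt_pow_iff_right₀ hg1).mp key2
      have hnR : (n:ℝ) ≤ m + k + 6 := by
        have h' : n ≤ m + k + 6 := by omega
        exact_mod_cast h'
      have hlog3 : (1:ℝ) < Real.log 3 := by
        rw [Real.lt_log_iff_exp_lt (by norm_num : (0:ℝ) < 3)]
        calc Real.exp 1 < 2.7182818286 := Real.exp_one_lt_d9
          _ < 3 := by norm_num
      have hlogb : Real.log 3 ≤ Real.log b := by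
        apply Real.log_le_log (by norm_num) hb3'
      linarith
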